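/- Let f : ℤ⁴ → ℝ be the quadratic multimodular function f(x) = xᵀAx with A having rows (3,2,1,0), (2,3,2,1), (1,2,2,1), (0,1,1,1). Then the projection f^U(y₁,y₂,y₄) = inf_{x₃ ∈ ℤ} f(y₁,y₂,x₃,y₄) to U = {1,2,4} is not multimodular. Hence projection of a multimodular function to a non-interval subset of coordinates need not be multimodular. -/

import Mathlib

/-- The set of multimodular directions
`F = {-e₁, e₁-e₂, e₂-e₃, …, e_{n-1}-eₙ, eₙ}` (1-indexed unit vectors). -/
def mmDir (n : ℕ) : Set (Fin n → ℤ) :=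
  {d | ∃ k ≤ n, d = fun j : Fin n =>
    (if (j : ℕ) + 1 = k then 1 else 0) - (if (j : ℕ) + 1 = k + 1 then 1 else 0)}

/-- `f : ℤⁿ → ℝ ∪ {+∞}` is multimodular. -/
def Multimodular {n : ℕ} (f : (Fin n → ℤ) → WithTop ℝ) : Prop :=
  ∀ z : Fin n → ℤ, f z ≠ ⊤ →
    ∀ d ∈ mmDir n, ∀ d' ∈ mmDir n, d ≠ d' →
      f z + f (z + d + d') ≤ f (z + d) + f (z + d')

/-- Submodularity on `ℤᵐ`. -/
def Submodular {m : ℕ} (h : (Fin m → ℤ) → WithTop ℝ) : Prop :=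
  ∀ x y : Fin m → ℤ, h (x ⊔ y) + h (x ⊓ y) ≤ h x + h y

/-- L♮-convexity via discrete midpoint convexity. -/
def LnatConvex {n : ℕ} (g : (Fin n → ℤ) → WithTop ℝ) : Prop :=
  ∀ p q : Fin n → ℤ,
    g (fun j => Int.fdiv (p j + q j + 1) 2) + g (fun j => Int.fdiv (p j + q j) 2)
      ≤ g p + g q

/-- The quadratic form `xᵀAx` with `A` having rows
`(3,2,1,0), (2,3,2,1), (1,2,2,1), (0,1,1,1)`. -/
noncomputable def fEx18 : (Fin 4 → ℤ) → ℝ := fun x =>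
  ∑ i : Fin 4, ∑ j : Fin 4,
    (x i : ℝ) * (!![3, 2, 1, 0; 2, 3, 2, 1; 1, 2, 2, 1; 0, 1, 1, 1] : Matrix (Fin 4) (Fin 4) ℝ) i j * (x j : ℝ)

lemma fEx18_eq (x : Fin 4 → ℤ) : fEx18 x = 3*(x 0:ℝ)^2 + 3*(x 1:ℝ)^2 + 2*(x 2:ℝ)^2 + (x 3:ℝ)^2
    + 4*(x 0:ℝ)*(x 1) + 2*(x 0:ℝ)*(x 2) + 4*(x 1:ℝ)*(x 2) + 2*(x 1:ℝ)*(x 3) + 2*(x 2:ℝ)*(x 3) := by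
  simp [fEx18, Fin.sum_univ_four, Matrix.cons_val_zero, Matrix.cons_val_one, Matrix.head_cons,
    Matrix.vecHead, Matrix.vecTail]
  ring

lemma iInf_eq_of_min (h : ℤ → ℝ) (v : ℝ) (z₀ : ℤ) (hv : ∀ z, v ≤ h z) (h0 : h z₀ = v) :
    ⨅ z, h z = v :=
  le_antisymm (h0 ▸ ciInf_le ⟨v, fun _ ⟨z, hz⟩ => hz ▸ hv z⟩ z₀) (le_ciInf hv)

lemma zz1 (z : ℤ) : 0 ≤ (z:ℝ) * (z+1) := by
  rcases le_or_gt 0 z with h | h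
  · have h' : (0:ℝ) ≤ z := by exact_mod_cast h
    nlinarith
  · have h' : (z:ℝ) + 1 ≤ 0 := by exact_mod_cast h
    nlinarith

lemma infA : ⨅ z : ℤ, fEx18 ![1, 0, z, 0] = 3 := by
  apply iInf_eq_of_min _ _ 0
  · intro z; rw [fEx18_eq]; simp; nlinarith [zz1 z]
  · rw [fEx18_eq]; simp [Matrix.cons_val_two, Matrix.vecHead, Matrix.vecTail]

lemma infB : ⨅ z : ℤ, fEx18 ![2, -1, z, 0] = 7 := by
  apply iInf_eq_of_min _ _ 0
  · intro z; rw [fEx18_eq]; simp; nlinarith [sq_nonneg (z:ℝ)]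
  · rw [fEx18_eq]; simp [Matrix.cons_val_two, Matrix.vecHead, Matrix.vecTail]; norm_num

lemma infC : ⨅ z : ℤ, fEx18 ![1, 1, z, -1] = 7 := by
  apply iInf_eq_of_min _ _ (-1)
  · intro z; rw [fEx18_eq]; simp; nlinarith [sq_nonneg ((z:ℝ) + 1)]
  · rw [fEx18_eq]; simp [Matrix.cons_val_two, Matrix.vecHead, Matrix.vecTail]; norm_num

lemma infD : ⨅ z : ℤ, fEx18 ![2, 0, z, -1] = 13 := by
  apply iInf_eq_of_min _ _ 0
  · intro z; rw [fEx18_eq]; simp; nlinarith [zz1 z]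
  · rw [fEx18_eq]; simp [Matrix.cons_val_two, Matrix.vecHead, Matrix.vecTail]; norm_num

set_option maxHeartbeats 1600000 in
theorem projection_to_noninterval_not_multimodular :
    Multimodular (fun x : Fin 4 → ℤ => ((fEx18 x : ℝ) : WithTop ℝ)) ∧
      ¬ Multimodular (fun y : Fin 3 → ℤ =>
        (((⨅ z : ℤ, fEx18 ![y 0, y 1, z, y 2] : ℝ)) : WithTop ℝ)) := by
  constructor
  · rintro z - d ⟨k, hk, rfl⟩ d' ⟨k', hk', rfl⟩ hne
    interval_cases k <;> interval_cases k' <;>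
      first
      | exact absurd rfl hne
      | · rw [← WithTop.coe_add, ← WithTop.coe_add, WithTop.coe_le_coe]
          simp only [fEx18_eq, Pi.add_apply, show ((0:Fin 4):ℕ)=0 from rfl,
            show ((1:Fin 4):ℕ)=1 from rfl, show ((2:Fin 4):ℕ)=2 from rfl,
            show ((3:Fin 4):ℕ)=3 from rfl]
          norm_num
          ring_nf
          try norm_num
          try linarith
  · intro H
    have h1 : ((fun y : Fin 3 → ℤ =>
        (((⨅ z : ℤ, fEx18 ![y 0, y 1, z, y 2] : ℝ)) : WithTop ℝ)) ![1,0,0]) ≠ ⊤ :=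
      WithTop.coe_ne_top
    have hd : (fun j : Fin 3 =>
        ((if (j : ℕ) + 1 = 1 then 1 else 0) - (if (j : ℕ) + 1 = 2 then 1 else 0) : ℤ)) ∈ mmDir 3 :=
      ⟨1, by norm_num, rfl⟩
    have hd' : (fun j : Fin 3 =>
        ((if (j : ℕ) + 1 = 2 then 1 else 0) - (if (j : ℕ) + 1 = 3 then 1 else 0) : ℤ)) ∈ mmDir 3 :=
      ⟨2, by norm_num, rfl⟩
    have hne : (fun j : Fin 3 =>
        ((if (j : ℕ) + 1 = 1 then 1 else 0) - (if (j : ℕ) + 1 = 2 then 1 else 0) : ℤ)) ≠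
        (fun j : Fin 3 =>
        ((if (j : ℕ) + 1 = 2 then 1 else 0) - (if (j : ℕ) + 1 = 3 then 1 else 0) : ℤ)) := by
      intro h
      have := congrFun h 0
      norm_num at this
    have key := H ![1,0,0] h1 _ hd _ hd' hne
    simp only [Pi.add_apply] at key
    norm_num [Matrix.cons_val_two, Matrix.vecHead, Matrix.vecTail] at key
    rw [infA, infB, infC, infD] at key
    rw [← WithTop.coe_add, ← WithTop.coe_add, WithTop.coe_le_coe] at key
    norm_num at key
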